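/- Let f : ℝ → ℂ^{d×d} take Hermitian values, let f̂₀ ∈ ℂ^{d×d} be Hermitian invertible, let q ∈ ℂ^d, and set f̃(θ) = q^H f(θ) q. Fix n ≥ 1 and assume f̃(θ_i^{(n)}) ≠ 0 for every i = 0,…,n−1, so that the coarse matrix P^H C_n(f) P is invertible, where P = I_n ⊗ q. Then for any ω_pre, ω_post ∈ ℝ, the two-grid iteration matrix M_n = (I_{dn} − ω_post (I_n ⊗ f̂₀^{-1}) C_n(f)) (I_{dn} − P (P^H C_n(f) P)^{-1} P^H C_n(f)) (I_{dn} − ω_pre (I_n ⊗ f̂₀^{-1}) C_n(f)) equals C_n(g), the block circulant matrix generated by g(θ) = (I_d − ω_post f̂₀^{-1} f(θ)) (I_d − f̃(θ)^{-1} q q^H f(θ)) (I_d − ω_pre f̂₀^{-1} f(θ)). -/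

import Mathlib

open Matrix
open scoped Kronecker

/-- The grid points `θ_i^{(n)} = 2πi/n`. -/
noncomputable def gridPt (n : ℕ) (i : Fin n) : ℝ := 2 * Real.pi * i / n

/-- The Fourier matrix `F_n` with entries `n^{-1/2} e^{2πi jk/n}`. -/
noncomputable def Fmat (n : ℕ) : Matrix (Fin n) (Fin n) ℂ :=
  Matrix.of fun j k : Fin n =>
    (((Real.sqrt n)⁻¹ : ℝ) : ℂ) *
      Complex.exp (2 * Real.pi * Complex.I * (j : ℕ) * (k : ℕ) / n)

/-- The block diagonal matrix with `d×d` diagonal blocks `g 0, …, g (n-1)`. -/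
def blkDiag (n d : ℕ) (g : Fin n → Matrix (Fin d) (Fin d) ℂ) :
    Matrix (Fin n × Fin d) (Fin n × Fin d) ℂ :=
  Matrix.of fun p q => if p.1 = q.1 then g p.1 p.2 q.2 else 0

/-- The `dn × dn` block circulant matrix generated by `f : ℝ → ℂ^{d×d}`. -/
noncomputable def Cblock (n d : ℕ) (f : ℝ → Matrix (Fin d) (Fin d) ℂ) :
    Matrix (Fin n × Fin d) (Fin n × Fin d) ℂ :=
  (Fmat n ⊗ₖ (1 : Matrix (Fin d) (Fin d) ℂ)) *
    blkDiag n d (fun i => f (gridPt n i)) *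
    (Fmat n ⊗ₖ (1 : Matrix (Fin d) (Fin d) ℂ))ᴴ

/-- The aggregation operator `P = I_n ⊗ q : ℂ^{dn × n}`. -/
def aggOp (n d : ℕ) (q : Fin d → ℂ) : Matrix (Fin n × Fin d) (Fin n) ℂ :=
  Matrix.of fun p j => if p.1 = j then q p.2 else 0

/-! ### Auxiliary lemmas -/

theorem Fmat_mul_conjTranspose {n : ℕ} (hn : 1 ≤ n) : Fmat n * (Fmat n)ᴴ = 1 := by
  have hn0 : (n : ℂ) ≠ 0 := Nat.cast_ne_zero.mpr (by omega)
  have hnR : (0:ℝ) < n := by exact_mod_cast Nat.lt_of_lt_of_le Nat.zero_lt_one hn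
  ext j j'
  have hc : ((((Real.sqrt n)⁻¹ : ℝ) : ℂ)) * (((Real.sqrt n)⁻¹ : ℝ) : ℂ) = ((n:ℂ))⁻¹ := by
    rw [← Complex.ofReal_mul, ← mul_inv, Real.mul_self_sqrt hnR.le, Complex.ofReal_inv,
      Complex.ofReal_natCast]
  have key : ∀ k : Fin n,
      Fmat n j k * (starRingEnd ℂ) (Fmat n j' k) =
      ((n : ℂ))⁻¹ * (Complex.exp (2 * Real.pi * Complex.I * (((j:ℤ) - (j':ℤ)):ℂ) / n)) ^ (k:ℕ) := by
    intro k
    have hconj : (starRingEnd ℂ) (Complex.exp (2 * (Real.pi:ℂ) * Complex.I * ((j':Fin n):ℕ) * ((k:Fin n):ℕ) / n)) =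
        Complex.exp (-(2 * (Real.pi:ℂ) * Complex.I * ((j':Fin n):ℕ) * ((k:Fin n):ℕ) / n)) := by
      rw [← Complex.exp_conj]
      congr 1
      simp only [map_div₀, _root_.map_mul, Complex.conj_I, Complex.conj_natCast,
        Complex.conj_ofNat]
      rw [Complex.conj_ofReal]
      ring
    simp only [Fmat, Matrix.of_apply, _root_.map_mul, Complex.conj_ofReal, hconj]
    rw [show (((Real.sqrt n)⁻¹:ℝ):ℂ) * Complex.exp (2 * ↑Real.pi * Complex.I * ↑↑j * ↑↑k / ↑n) *
        ((((Real.sqrt n)⁻¹:ℝ):ℂ) * Complex.exp (-(2 * ↑Real.pi * Complex.I * ↑↑j' * ↑↑k / ↑n))) =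
        ((((Real.sqrt n)⁻¹:ℝ):ℂ) * (((Real.sqrt n)⁻¹:ℝ):ℂ)) *
        (Complex.exp (2 * ↑Real.pi * Complex.I * ↑↑j * ↑↑k / ↑n) *
         Complex.exp (-(2 * ↑Real.pi * Complex.I * ↑↑j' * ↑↑k / ↑n))) by ring, hc,
      ← Complex.exp_add, ← Complex.exp_nat_mul]
    congr 1
    push_cast
    field_simp
    ring
  simp only [Matrix.mul_apply, Matrix.conjTranspose_apply, RCLike.star_def, key]
  rw [← Finset.mul_sum]
  rcases eq_or_ne j j' with h | h
  · subst h
    simp only [sub_self, Int.cast_zero, mul_zero, zero_mul, zero_div, mul_zero,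
      Complex.exp_zero, one_pow, Finset.sum_const, Finset.card_univ, Fintype.card_fin,
      nsmul_eq_mul, mul_one]
    rw [inv_mul_cancel₀ hn0]
    simp [Matrix.one_apply]
  · set w : ℂ := Complex.exp (2 * Real.pi * Complex.I * (((j:ℤ) - (j':ℤ)):ℂ) / n) with hw
    have hwn : w ^ n = 1 := by
      rw [hw, ← Complex.exp_nat_mul]
      rw [show (n:ℂ) * (2 * Real.pi * Complex.I * (((j:ℤ) - (j':ℤ)):ℂ) / n) =
          (((j:ℤ) - (j':ℤ)):ℂ) * (2 * Real.pi * Complex.I) by field_simp]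
      exact_mod_cast Complex.exp_int_mul_two_pi_mul_I ((j:ℤ) - (j':ℤ))
    have hw1 : w ≠ 1 := by
      rw [hw, Ne, Complex.exp_eq_one_iff]
      rintro ⟨k, hk⟩
      have h2 : (2 * (Real.pi:ℂ) * Complex.I) ≠ 0 := by
        simp [Real.pi_ne_zero, Complex.I_ne_zero, Complex.ofReal_ne_zero]
      have hmul := congrArg (· * (n:ℂ)) hk
      simp only [div_mul_cancel₀ _ hn0] at hmul
      have hmc : (((j:ℤ) - (j':ℤ)):ℂ) = (k:ℂ) * n := by
        refine mul_left_cancel₀ h2 ?_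
        linear_combination hmul
      have hzz : ((j:ℤ) - (j':ℤ)) = k * n := by exact_mod_cast hmc
      have hj : (j:ℤ) < n := by exact_mod_cast j.2
      have hj' : (j':ℤ) < n := by exact_mod_cast j'.2
      have hj0 : (0:ℤ) ≤ (j:ℤ) := Int.natCast_nonneg _
      have hj'0 : (0:ℤ) ≤ (j':ℤ) := Int.natCast_nonneg _
      have hjj : (j:ℤ) ≠ (j':ℤ) := by
        simpa [Fin.ext_iff, Ne] using fun hh => h (Fin.ext (by exact_mod_cast hh))
      have hnz : (0:ℤ) < n := by exact_mod_cast (by omega : 0 < n)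
      have hk1 : k < 1 := by
        have : k * (n:ℤ) < 1 * n := by rw [one_mul]; omega
        exact lt_of_mul_lt_mul_right this hnz.le
      have hk2 : -1 < k := by
        have : (-1 : ℤ) * n < k * n := by rw [neg_one_mul]; omega
        exact lt_of_mul_lt_mul_right this hnz.le
      have hk0 : k = 0 := by omega
      rw [hk0, zero_mul] at hzz
      omega
    rw [Fin.sum_univ_eq_sum_range (fun k => w ^ k), geom_sum_eq hw1, hwn]
    simp [Matrix.one_apply, h]

theorem blkDiag_mul (n d : ℕ) (g h : Fin n → Matrix (Fin d) (Fin d) ℂ) :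
    blkDiag n d g * blkDiag n d h = blkDiag n d (fun i => g i * h i) := by
  ext p r
  simp only [blkDiag, Matrix.mul_apply, Matrix.of_apply, Fintype.sum_prod_type]
  rcases eq_or_ne p.1 r.1 with h1 | h1
  · simp [h1, Matrix.mul_apply]
  · simp only [h1, if_false]
    refine Finset.sum_eq_zero fun i _ => Finset.sum_eq_zero fun b _ => ?_
    rcases eq_or_ne p.1 i with h2 | h2
    · simp [← h2, h1]
    · simp [h2]

theorem blkDiag_one (n d : ℕ) : blkDiag n d (fun _ => 1) = 1 := by
  ext p r
  simp only [blkDiag, Matrix.of_apply, Matrix.one_apply, Prod.ext_iff]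
  rcases eq_or_ne p.1 r.1 with h1 | h1 <;> rcases eq_or_ne p.2 r.2 with h2 | h2 <;>
    simp [h1, h2]

theorem blkDiag_smul (n d : ℕ) (c : ℂ) (g : Fin n → Matrix (Fin d) (Fin d) ℂ) :
    c • blkDiag n d g = blkDiag n d (fun i => c • g i) := by
  ext p r
  simp only [blkDiag, Matrix.smul_apply, Matrix.of_apply, smul_eq_mul]
  split <;> simp

theorem blkDiag_sub (n d : ℕ) (g h : Fin n → Matrix (Fin d) (Fin d) ℂ) :
    blkDiag n d g - blkDiag n d h = blkDiag n d (fun i => g i - h i) := by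
  ext p r
  simp only [blkDiag, Matrix.sub_apply, Matrix.of_apply]
  split <;> simp

theorem blkDiag_const_eq_kron (n d : ℕ) (A : Matrix (Fin d) (Fin d) ℂ) :
    blkDiag n d (fun _ => A) = (1 : Matrix (Fin n) (Fin n) ℂ) ⊗ₖ A := by
  ext p r
  simp [blkDiag, Matrix.kroneckerMap_apply, Matrix.one_apply]

theorem kron_one_conjTranspose (n d : ℕ) (A : Matrix (Fin n) (Fin n) ℂ) :
    (A ⊗ₖ (1 : Matrix (Fin d) (Fin d) ℂ))ᴴ = Aᴴ ⊗ₖ (1 : Matrix (Fin d) (Fin d) ℂ) := by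
  ext p r
  simp only [Matrix.conjTranspose_apply, Matrix.kroneckerMap_apply, Matrix.one_apply, star_mul',
    Matrix.conjTranspose_apply]
  rcases eq_or_ne p.2 r.2 with h2 | h2 <;> simp [h2, eq_comm, mul_comm]

theorem kron_mul_aggOp (n d : ℕ) (q : Fin d → ℂ) (A : Matrix (Fin n) (Fin n) ℂ) :
    (A ⊗ₖ (1 : Matrix (Fin d) (Fin d) ℂ)) * aggOp n d q = aggOp n d q * A := by
  ext p k
  simp only [Matrix.mul_apply, Fintype.sum_prod_type, aggOp, Matrix.kroneckerMap_apply,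
    Matrix.one_apply, Matrix.of_apply, mul_ite, ite_mul, mul_zero, zero_mul, mul_one]
  simp [Finset.sum_ite_eq, Finset.sum_ite_eq', mul_comm]

theorem conjT_aggOp_blkDiag_aggOp (n d : ℕ) (q : Fin d → ℂ)
    (g : Fin n → Matrix (Fin d) (Fin d) ℂ) :
    (aggOp n d q)ᴴ * blkDiag n d g * aggOp n d q =
      Matrix.diagonal (fun i => star q ⬝ᵥ (g i *ᵥ q)) := by
  ext j k
  simp only [Matrix.mul_apply, Fintype.sum_prod_type, aggOp, blkDiag,
    Matrix.conjTranspose_apply, Matrix.of_apply, Matrix.diagonal_apply,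
    dotProduct, Matrix.mulVec, Pi.star_apply, mul_ite, ite_mul, mul_zero, zero_mul,
    star_zero, apply_ite (star : ℂ → ℂ)]
  simp only [Finset.sum_ite_irrel, Finset.sum_const_zero, Finset.sum_ite_eq,
    Finset.sum_ite_eq', Finset.mem_univ, if_true]
  rcases eq_or_ne j k with h | h
  · subst h
    simp only [if_pos rfl, Finset.sum_mul, Finset.mul_sum]
    rw [Finset.sum_comm]
    refine Finset.sum_congr rfl fun a _ => ?_
    rw [if_pos trivial, Finset.sum_mul]
    exact Finset.sum_congr rfl fun b _ => by ring
  · simp [h, Ne.symm h]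

theorem aggOp_diagonal_conjT (n d : ℕ) (q : Fin d → ℂ) (c : Fin n → ℂ) :
    aggOp n d q * Matrix.diagonal c * (aggOp n d q)ᴴ =
      blkDiag n d (fun i => c i • vecMulVec q (star q)) := by
  ext p r
  simp only [Matrix.mul_apply, aggOp, blkDiag, Matrix.conjTranspose_apply, Matrix.of_apply,
    Matrix.diagonal_apply, Matrix.smul_apply, Matrix.vecMulVec_apply, Pi.star_apply,
    mul_ite, ite_mul, mul_zero, zero_mul, smul_eq_mul, Fintype.sum_prod_type,
    apply_ite (star : ℂ → ℂ), star_zero, Finset.sum_ite_irrel, Finset.sum_const_zero,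
    Finset.sum_ite_eq, Finset.sum_ite_eq', Finset.mem_univ, if_true]
  rcases eq_or_ne p.1 r.1 with h | h
  · simp [h]; ring
  · simp [h]

/-- The two-grid iteration matrix with block Jacobi smoothing and aggregation
grid transfer operator is the block circulant matrix generated by
`g(θ) = (I - ω_post f̂₀⁻¹ f(θ))(I - f̃(θ)⁻¹ qqᴴ f(θ))(I - ω_pre f̂₀⁻¹ f(θ))`. -/
theorem stmt13 {d : ℕ} (f : ℝ → Matrix (Fin d) (Fin d) ℂ)
    (hherm : ∀ θ, (f θ).IsHermitian)
    (fhat0 : Matrix (Fin d) (Fin d) ℂ) (hherm0 : fhat0.IsHermitian)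
    (hinv : IsUnit fhat0.det)
    (q : Fin d → ℂ) (n : ℕ) (hn : 1 ≤ n)
    (hgrid : ∀ i : Fin n, star q ⬝ᵥ (f (gridPt n i) *ᵥ q) ≠ 0)
    (ωpre ωpost : ℝ) :
    (1 - (ωpost : ℂ) • ((blkDiag n d fun _ => fhat0⁻¹) * Cblock n d f)) *
      (1 - aggOp n d q *
        ((aggOp n d q)ᴴ * Cblock n d f * aggOp n d q)⁻¹ *
        (aggOp n d q)ᴴ * Cblock n d f) *
      (1 - (ωpre : ℂ) • ((blkDiag n d fun _ => fhat0⁻¹) * Cblock n d f)) =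
    Cblock n d (fun θ =>
      (1 - (ωpost : ℂ) • (fhat0⁻¹ * f θ)) *
        (1 - (star q ⬝ᵥ (f θ *ᵥ q))⁻¹ • (vecMulVec q (star q) * f θ)) *
        (1 - (ωpre : ℂ) • (fhat0⁻¹ * f θ))) := by
  set U : Matrix (Fin n × Fin d) (Fin n × Fin d) ℂ :=
    Fmat n ⊗ₖ (1 : Matrix (Fin d) (Fin d) ℂ) with hUdef
  set P : Matrix (Fin n × Fin d) (Fin n) ℂ := aggOp n d q with hPdef
  set D : Matrix (Fin n × Fin d) (Fin n × Fin d) ℂ :=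
    blkDiag n d (fun i => f (gridPt n i)) with hDdef
  set ft : Fin n → ℂ := fun i => star q ⬝ᵥ (f (gridPt n i) *ᵥ q) with hftdef
  -- unitarity
  have hFF : Fmat n * (Fmat n)ᴴ = 1 := Fmat_mul_conjTranspose hn
  have hFF' : (Fmat n)ᴴ * Fmat n = 1 := mul_eq_one_comm.mp hFF
  have hUH : Uᴴ = (Fmat n)ᴴ ⊗ₖ (1 : Matrix (Fin d) (Fin d) ℂ) :=
    kron_one_conjTranspose n d (Fmat n)
  have hU1 : U * Uᴴ = 1 := by
    rw [hUH, hUdef, ← Matrix.mul_kronecker_mul, hFF, Matrix.one_mul, Matrix.one_kronecker_one]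
  have hU2 : Uᴴ * U = 1 := by
    rw [hUH, hUdef, ← Matrix.mul_kronecker_mul, hFF', Matrix.one_mul, Matrix.one_kronecker_one]
  have hC : Cblock n d f = U * D * Uᴴ := rfl
  -- conjugation is multiplicative
  have conj_mul : ∀ A B : Matrix (Fin n × Fin d) (Fin n × Fin d) ℂ,
      (U * A * Uᴴ) * (U * B * Uᴴ) = U * (A * B) * Uᴴ := by
    intro A B
    calc (U * A * Uᴴ) * (U * B * Uᴴ) = U * (A * ((Uᴴ * U) * (B * Uᴴ))) := by
          simp only [Matrix.mul_assoc]
      _ = U * (A * B) * Uᴴ := by rw [hU2, Matrix.one_mul]; simp only [Matrix.mul_assoc]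
  have hone : U * blkDiag n d (fun _ => 1) * Uᴴ = 1 := by
    rw [blkDiag_one, Matrix.mul_one, hU1]
  -- the smoother term
  have hcomm : ((1 : Matrix (Fin n) (Fin n) ℂ) ⊗ₖ fhat0⁻¹) * U =
      U * ((1 : Matrix (Fin n) (Fin n) ℂ) ⊗ₖ fhat0⁻¹) := by
    simp only [hUdef, ← Matrix.mul_kronecker_mul, Matrix.one_mul, Matrix.mul_one]
  have hS : (blkDiag n d fun _ => fhat0⁻¹) * Cblock n d f =
      U * blkDiag n d (fun i => fhat0⁻¹ * f (gridPt n i)) * Uᴴ := by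
    rw [hC, blkDiag_const_eq_kron, ← Matrix.mul_assoc, ← Matrix.mul_assoc, hcomm,
      Matrix.mul_assoc U, ← blkDiag_const_eq_kron, blkDiag_mul]
  -- smoother factors
  have smooth : ∀ ω : ℝ, (1 : Matrix (Fin n × Fin d) (Fin n × Fin d) ℂ) -
      (ω : ℂ) • ((blkDiag n d fun _ => fhat0⁻¹) * Cblock n d f) =
      U * blkDiag n d (fun i => 1 - (ω : ℂ) • (fhat0⁻¹ * f (gridPt n i))) * Uᴴ := by
    intro ω
    rw [hS, ← hone, ← blkDiag_sub, Matrix.mul_sub, Matrix.sub_mul, ← blkDiag_smul,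
      mul_smul_comm, smul_mul_assoc]
  -- coarse grid correction
  have hUP : U * P = P * Fmat n := kron_mul_aggOp n d q (Fmat n)
  have hUHP : Uᴴ * P = P * (Fmat n)ᴴ := by
    have h1 : Uᴴ * (U * P) = Uᴴ * (P * Fmat n) := by rw [hUP]
    rw [← Matrix.mul_assoc, hU2, Matrix.one_mul] at h1
    have h2 := congrArg (· * (Fmat n)ᴴ) h1
    simp only [Matrix.mul_assoc, hFF, Matrix.mul_one] at h2
    exact h2.symm
  have hPU : Pᴴ * U = Fmat n * Pᴴ := by
    have := congrArg Matrix.conjTranspose hUHP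
    simpa only [Matrix.conjTranspose_mul, Matrix.conjTranspose_conjTranspose] using this
  have hPUH : Pᴴ * Uᴴ = (Fmat n)ᴴ * Pᴴ := by
    have := congrArg Matrix.conjTranspose hUP
    simpa only [Matrix.conjTranspose_mul, Matrix.conjTranspose_conjTranspose] using this
  have hPDi : Pᴴ * D * P = Matrix.diagonal ft :=
    conjT_aggOp_blkDiag_aggOp n d q (fun i => f (gridPt n i))
  have hPD : P * Matrix.diagonal (fun i => (ft i)⁻¹) * Pᴴ =
      blkDiag n d (fun i => (ft i)⁻¹ • vecMulVec q (star q)) :=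
    aggOp_diagonal_conjT n d q (fun i => (ft i)⁻¹)
  have hcoarse : Pᴴ * Cblock n d f * P = Fmat n * Matrix.diagonal ft * (Fmat n)ᴴ := by
    rw [hC]
    calc Pᴴ * (U * D * Uᴴ) * P = (Pᴴ * U) * D * (Uᴴ * P) := by simp only [Matrix.mul_assoc]
      _ = (Fmat n * Pᴴ) * D * (P * (Fmat n)ᴴ) := by rw [hPU, hUHP]
      _ = Fmat n * (Pᴴ * D * P) * (Fmat n)ᴴ := by simp only [Matrix.mul_assoc]
      _ = Fmat n * Matrix.diagonal ft * (Fmat n)ᴴ := by rw [hPDi]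
  have hdd : Matrix.diagonal ft * Matrix.diagonal (fun i => (ft i)⁻¹) =
      (1 : Matrix (Fin n) (Fin n) ℂ) := by
    rw [Matrix.diagonal_mul_diagonal]
    have h9 : (fun i => ft i * (ft i)⁻¹) = fun _ : Fin n => (1:ℂ) :=
      funext fun i => mul_inv_cancel₀ (hgrid i)
    rw [h9, Matrix.diagonal_one]
  have hcoarse_inv : (Pᴴ * Cblock n d f * P)⁻¹ =
      Fmat n * Matrix.diagonal (fun i => (ft i)⁻¹) * (Fmat n)ᴴ := by
    apply Matrix.inv_eq_right_inv
    rw [hcoarse]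
    calc Fmat n * Matrix.diagonal ft * (Fmat n)ᴴ *
          (Fmat n * Matrix.diagonal (fun i => (ft i)⁻¹) * (Fmat n)ᴴ)
        = Fmat n * (Matrix.diagonal ft * (((Fmat n)ᴴ * Fmat n) *
            (Matrix.diagonal (fun i => (ft i)⁻¹) * (Fmat n)ᴴ))) := by
          simp only [Matrix.mul_assoc]
      _ = Fmat n * (Matrix.diagonal ft * Matrix.diagonal (fun i => (ft i)⁻¹)) * (Fmat n)ᴴ := by
          rw [hFF', Matrix.one_mul]; simp only [Matrix.mul_assoc]
      _ = 1 := by rw [hdd, Matrix.mul_one, hFF]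
  have hT : P * (Pᴴ * Cblock n d f * P)⁻¹ * Pᴴ * Cblock n d f =
      U * blkDiag n d (fun i => (ft i)⁻¹ • (vecMulVec q (star q) * f (gridPt n i))) * Uᴴ := by
    rw [hcoarse_inv, hC]
    calc P * (Fmat n * Matrix.diagonal (fun i => (ft i)⁻¹) * (Fmat n)ᴴ) * Pᴴ * (U * D * Uᴴ)
        = (P * Fmat n) * (Matrix.diagonal (fun i => (ft i)⁻¹) *
            (((Fmat n)ᴴ * Pᴴ) * (U * (D * Uᴴ)))) := by simp only [Matrix.mul_assoc]
      _ = (U * P) * (Matrix.diagonal (fun i => (ft i)⁻¹) *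
            ((Pᴴ * Uᴴ) * (U * (D * Uᴴ)))) := by rw [← hUP, ← hPUH]
      _ = U * ((P * Matrix.diagonal (fun i => (ft i)⁻¹) * Pᴴ) *
            ((Uᴴ * U) * (D * Uᴴ))) := by simp only [Matrix.mul_assoc]
      _ = U * ((blkDiag n d (fun i => (ft i)⁻¹ • vecMulVec q (star q)) * D) * Uᴴ) := by
          rw [hPD, hU2, Matrix.one_mul]; simp only [Matrix.mul_assoc]
      _ = U * blkDiag n d (fun i => (ft i)⁻¹ • (vecMulVec q (star q) * f (gridPt n i))) * Uᴴ := by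
          rw [hDdef, blkDiag_mul]
          simp only [smul_mul_assoc, Matrix.mul_assoc]
  have hCGC : (1 : Matrix (Fin n × Fin d) (Fin n × Fin d) ℂ) -
      P * (Pᴴ * Cblock n d f * P)⁻¹ * Pᴴ * Cblock n d f =
      U * blkDiag n d (fun i =>
        1 - (ft i)⁻¹ • (vecMulVec q (star q) * f (gridPt n i))) * Uᴴ := by
    rw [hT, ← hone, ← blkDiag_sub, Matrix.mul_sub, Matrix.sub_mul]
  rw [smooth ωpost, smooth ωpre, hCGC, conj_mul, conj_mul, blkDiag_mul, blkDiag_mul]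
  rfl
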